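/- Let P := ∩_{i=1}^n P_i where P_1,...,P_n ⊆ R^n are polyhedra, and call a vertex v of P 'mixed' if for every i in [n] there is a facet F_i of P_i with v ∈ F_i. In the Partition reduction (P_i for i ≤ n−1 the axis bricks and P_n the slab {(x,ξ_n) : −2·1 ≤ x ≤ 2·1, ξ_n = 1, 0 ≤ 2α·x ≤ 1} with α ∈ N^{d}, n = d+1): P has a mixed vertex if and only if there exists x ∈ {−1,1}^{d} with α·x = 0. -/

import Mathlib

/-- The axis-parallel brick `P_i` (for `i ≤ n-1`) of the Partition reduction. -/
def brickP (d : ℕ) (i : Fin d) : Set (EuclideanSpace ℝ (Fin (d + 1))) :=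
  {y | (-1 ≤ y i.castSucc ∧ y i.castSucc ≤ 1) ∧
    ∀ j : Fin (d + 1), j ≠ i.castSucc → (-2 ≤ y j ∧ y j ≤ 2)}

/-- The slab polyhedron `P_n` of the Partition reduction. -/
def slabPn (d : ℕ) (α : Fin d → ℕ) : Set (EuclideanSpace ℝ (Fin (d + 1))) :=
  {y | (∀ i : Fin d, -2 ≤ y i.castSucc ∧ y i.castSucc ≤ 2) ∧
    (1 ≤ y (Fin.last d) ∧ y (Fin.last d) ≤ 1) ∧
    (0 ≤ 2 * ∑ i, (α i : ℝ) * y i.castSucc ∧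
      2 * ∑ i, (α i : ℝ) * y i.castSucc ≤ 1)}

/-- `P := P_n ∩ ⋂ᵢ P_i`. -/
def polyP (d : ℕ) (α : Fin d → ℕ) : Set (EuclideanSpace ℝ (Fin (d + 1))) :=
  slabPn d α ∩ ⋂ i : Fin d, brickP d i

/-- `v` is a mixed vertex of `P`: a vertex (extreme point) of `P` lying, for each
`i ∈ [n]`, in a facet-defining hyperplane of `P_i` (for `i ≤ n-1` one of
`H(eᵢ,±1)`, `H(eⱼ,±2)`; for `P_n` one of its defining hyperplanes). -/
def IsMixedVertex (d : ℕ) (α : Fin d → ℕ)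
    (v : EuclideanSpace ℝ (Fin (d + 1))) : Prop :=
  v ∈ Set.extremePoints ℝ (polyP d α) ∧
    (∀ i : Fin d,
      (v i.castSucc = 1 ∨ v i.castSucc = -1) ∨
        ∃ j : Fin (d + 1), j ≠ i.castSucc ∧ (v j = 2 ∨ v j = -2)) ∧
    ((∑ i, (α i : ℝ) * v i.castSucc = 0) ∨
      (2 * ∑ i, (α i : ℝ) * v i.castSucc = 1) ∨
      (∃ i : Fin d, v i.castSucc = 2 ∨ v i.castSucc = -2) ∨
      v (Fin.last d) = 1)

private lemma coord_eq_one {a b s t : ℝ} (ha : 0 < a) (hb : 0 < b) (hab : a + b = 1)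
    (hs : s ≤ 1) (ht : t ≤ 1) (h : a * s + b * t = 1) : s = 1 ∧ t = 1 := by
  constructor <;> nlinarith

private lemma coord_eq_neg_one {a b s t : ℝ} (ha : 0 < a) (hb : 0 < b) (hab : a + b = 1)
    (hs : -1 ≤ s) (ht : -1 ≤ t) (h : a * s + b * t = -1) : s = -1 ∧ t = -1 := by
  constructor <;> nlinarith

/-- In the Partition reduction, `P = P_n ∩ ⋂ᵢ P_i` has a mixed vertex iff the
Partition instance `α` has a solution `x ∈ {-1,1}^d` with `α·x = 0`. -/
theorem mixed_vertex_iff_partition (d : ℕ) (α : Fin d → ℕ) (hα : ∀ i, 0 < α i) :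
    (∃ v, v ∈ polyP d α ∧ IsMixedVertex d α v) ↔
      ∃ x : Fin d → ℤ, (∀ i, x i = 1 ∨ x i = -1) ∧ ∑ i, (α i : ℤ) * x i = 0 := by
  constructor
  · rintro ⟨v, hv, hext, hmix, -⟩
    -- every coordinate bound: for i < d, -1 ≤ v i ≤ 1; v last = 1
    obtain ⟨hslab, hbricks⟩ := hv
    have hbrick : ∀ i : Fin d, v ∈ brickP d i := by
      intro i; exact Set.mem_iInter.1 hbricks i
    have hlast : v (Fin.last d) = 1 := le_antisymm hslab.2.1.2 hslab.2.1.1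
    have hbd : ∀ j : Fin (d + 1), -1 ≤ v j ∧ v j ≤ 1 := by
      intro j
      refine Fin.lastCases ?_ ?_ j
      · rw [hlast]; norm_num
      · intro i; exact (hbrick i).1
    have hpm : ∀ i : Fin d, v i.castSucc = 1 ∨ v i.castSucc = -1 := by
      intro i
      rcases hmix i with h | ⟨j, hj, hj2⟩
      · exact h
      · exfalso
        have := hbd j
        rcases hj2 with h | h <;> rw [h] at this <;> linarith [this.1, this.2]
    refine ⟨fun i => if v i.castSucc = 1 then 1 else -1, ?_, ?_⟩
    · intro i
      by_cases h : v i.castSucc = 1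
      · exact Or.inl (by simp [h])
      · exact Or.inr (by simp [h])
    have h0 := hslab.2.2.1
    have h1 := hslab.2.2.2
    set m : ℤ := ∑ i, (α i : ℤ) * (if v i.castSucc = (1:ℝ) then (1:ℤ) else -1) with hm
    have hsum : (m : ℝ) = ∑ i, (α i : ℝ) * v i.castSucc := by
      rw [hm, Int.cast_sum]
      refine Finset.sum_congr rfl fun i _ => ?_
      rcases hpm i with h | h
      · rw [if_pos h, h]; push_cast; ring
      · rw [if_neg (by rw [h]; norm_num), h]; push_cast; ring
    have hge : (0:ℝ) ≤ (m : ℝ) := by rw [hsum]; linarith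
    have hle : 2 * (m : ℝ) ≤ 1 := by rw [hsum]; linarith
    have hge' : (0:ℤ) ≤ m := by exact_mod_cast hge
    have hle' : 2 * m ≤ 1 := by exact_mod_cast hle
    omega
  · rintro ⟨x, hx, hsum⟩
    set v : EuclideanSpace ℝ (Fin (d + 1)) :=
      WithLp.toLp 2 (fun j => Fin.lastCases 1 (fun i => (x i : ℝ)) j) with hvdef
    have hvl : v (Fin.last d) = 1 := by simp [hvdef]
    have hvc : ∀ i : Fin d, v i.castSucc = (x i : ℝ) := by
      intro i; simp [hvdef]
    have hvpm : ∀ i : Fin d, v i.castSucc = 1 ∨ v i.castSucc = -1 := by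
      intro i; rw [hvc i]
      rcases hx i with h | h <;> [left; right] <;> rw [h] <;> norm_num
    have hvbd : ∀ j : Fin (d + 1), -1 ≤ v j ∧ v j ≤ 1 := by
      intro j
      refine Fin.lastCases ?_ ?_ j
      · rw [hvl]; norm_num
      · intro i; rcases hvpm i with h | h <;> rw [h] <;> norm_num
    have hS : ∑ i, (α i : ℝ) * v i.castSucc = 0 := by
      have : ((∑ i, (α i : ℤ) * x i : ℤ) : ℝ) = ∑ i, (α i : ℝ) * v i.castSucc := by
        push_cast
        exact Finset.sum_congr rfl fun i _ => by rw [hvc i]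
      rw [← this, hsum]; norm_num
    have hvmem : v ∈ polyP d α := by
      refine ⟨⟨fun i => ⟨by linarith [(hvbd i.castSucc).1], by linarith [(hvbd i.castSucc).2]⟩,
        ⟨hvl.ge, hvl.le⟩, by rw [hS]; norm_num⟩, ?_⟩
      refine Set.mem_iInter.2 fun i => ⟨hvbd i.castSucc, fun j _ =>
        ⟨by linarith [(hvbd j).1], by linarith [(hvbd j).2]⟩⟩
    refine ⟨v, hvmem, ⟨hvmem, ?_⟩, fun i => Or.inl (hvpm i), Or.inl hS⟩
    -- extreme point
    rintro y hy z hz hseg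
    obtain ⟨a, b, ha, hb, hab, hvy⟩ := hseg
    have hcoord : ∀ j : Fin (d + 1), a * y j + b * z j = v j := by
      intro j
      rw [← hvy]
      simp [PiLp.add_apply, PiLp.smul_apply, smul_eq_mul]
    obtain ⟨hyslab, hybricks⟩ := hy
    obtain ⟨hzslab, hzbricks⟩ := hz
    have hylast : y (Fin.last d) = 1 := le_antisymm hyslab.2.1.2 hyslab.2.1.1
    have hzlast : z (Fin.last d) = 1 := le_antisymm hzslab.2.1.2 hzslab.2.1.1
    have hybd : ∀ i : Fin d, -1 ≤ y i.castSucc ∧ y i.castSucc ≤ 1 :=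
      fun i => (Set.mem_iInter.1 hybricks i).1
    have hzbd : ∀ i : Fin d, -1 ≤ z i.castSucc ∧ z i.castSucc ≤ 1 :=
      fun i => (Set.mem_iInter.1 hzbricks i).1
    have key : ∀ j : Fin (d + 1), y j = v j ∧ z j = v j := by
      intro j
      refine Fin.lastCases ?_ ?_ j
      · rw [hylast, hzlast, hvl]; exact ⟨rfl, rfl⟩
      · intro i
        rcases hvpm i with h | h
        · have := coord_eq_one ha hb hab (hybd i).2 (hzbd i).2
            (by rw [hcoord i.castSucc, h])
          rw [h]; exact this
        · have := coord_eq_neg_one ha hb hab (hybd i).1 (hzbd i).1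
            (by rw [hcoord i.castSucc, h])
          rw [h]; exact this
    ext j
    exact (key j).1
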